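/- Let λ_1, λ_2 > 0 and consider the two-element chain poset 1 ≺ 2 with states ∅, {1}, {1,2} and rate matrix Q = [[−λ_1, λ_1, 0], [0, −λ_2, λ_2], [0, 0, 0]]. Let p̃_{∅,{1}}(t) = (1 − e^{−λ_1 t}) e^{−λ_2 t} be the corresponding entry of the discrete CBN transition function. Then the second derivative satisfies (d²/dt²) p̃_{∅,{1}}(t) |_{t=0} = −λ_1² − 2λ_1λ_2, whereas (Q²)_{∅,{1}} = −λ_1² − λ_1λ_2; in particular these differ (since λ_1λ_2 > 0), so p̃ is not a second order approximation of exp(tQ). -/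

import Mathlib

lemma expD (c : ℝ) (t : ℝ) : HasDerivAt (fun t : ℝ => Real.exp (c * t)) (c * Real.exp (c * t)) t := by
  simpa [Function.comp_def, mul_comm] using
    (Real.hasDerivAt_exp (c * t)).comp t ((hasDerivAt_id t).const_mul c)

lemma d1 (l1 l2 : ℝ) :
    deriv (fun t : ℝ => (1 - Real.exp (-l1 * t)) * Real.exp (-l2 * t)) =
    fun t : ℝ => -l2 * Real.exp (-l2 * t) + (l1 + l2) * Real.exp (-(l1 + l2) * t) := by
  funext t
  have h : (fun t : ℝ => (1 - Real.exp (-l1 * t)) * Real.exp (-l2 * t)) =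
      fun t : ℝ => Real.exp (-l2 * t) - Real.exp (-(l1 + l2) * t) := by
    funext t
    rw [sub_mul, one_mul, ← Real.exp_add]
    ring_nf
  rw [h]
  have e1 := expD (-l2) t
  have e2 := expD (-(l1 + l2)) t
  have := (e1.sub e2).deriv
  refine this.trans ?_; ring

/-- For the two-element chain poset `1 ≺ 2` with rate matrix
`Q = [[−λ_1, λ_1, 0], [0, −λ_2, λ_2], [0, 0, 0]]` and discrete CBN transition entry
`p̃_{∅,{1}}(t) = (1 − e^{−λ_1 t}) e^{−λ_2 t}`, we have
`(d²/dt²) p̃_{∅,{1}}(t)|_{t=0} = −λ_1² − 2λ_1λ_2` while `(Q²)_{∅,{1}} = −λ_1² − λ_1λ_2`;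
these differ, so `p̃` is not a second order approximation of `exp(tQ)`. -/
theorem stmt10 (l1 l2 : ℝ) (h1 : 0 < l1) (h2 : 0 < l2) :
    deriv (deriv (fun t : ℝ => (1 - Real.exp (-l1 * t)) * Real.exp (-l2 * t))) 0 =
        -l1 ^ 2 - 2 * l1 * l2 ∧
    ((!![-l1, l1, 0; 0, -l2, l2; 0, 0, 0] : Matrix (Fin 3) (Fin 3) ℝ) ^ 2) 0 1 =
        -l1 ^ 2 - l1 * l2 ∧
    deriv (deriv (fun t : ℝ => (1 - Real.exp (-l1 * t)) * Real.exp (-l2 * t))) 0 ≠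
      ((!![-l1, l1, 0; 0, -l2, l2; 0, 0, 0] : Matrix (Fin 3) (Fin 3) ℝ) ^ 2) 0 1 := by
  have key : deriv (deriv (fun t : ℝ => (1 - Real.exp (-l1 * t)) * Real.exp (-l2 * t))) 0 =
      -l1 ^ 2 - 2 * l1 * l2 := by
    rw [d1]
    have e1 := expD (-l2) 0
    have e2 := expD (-(l1 + l2)) 0
    have := ((e1.const_mul (-l2)).add (e2.const_mul (l1 + l2))).deriv
    refine this.trans ?_; simp; ring
  have mkey : ((!![-l1, l1, 0; 0, -l2, l2; 0, 0, 0] : Matrix (Fin 3) (Fin 3) ℝ) ^ 2) 0 1 =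
      -l1 ^ 2 - l1 * l2 := by
    rw [sq, Matrix.mul_apply]
    simp [Fin.sum_univ_three, Matrix.cons_val_zero, Matrix.cons_val_one]
    ring
  refine ⟨key, mkey, ?_⟩
  rw [key, mkey]
  intro h
  have : l1 * l2 = 0 := by linarith
  nlinarith
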